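/- Let T be an invertible n×n Toeplitz matrix, g(x) the polynomial of a right-hand side g ∈ K^n, and let {(u₁,v₁,w₁), (u₂,v₂,w₂)} be a basis of L(T̃(x), x^n, x^{2n}−1) of degree n. Then the remainder of the division of the vector (0, x^n·g(x), −g(x))ᵀ by the 3×2 matrix with columns (u₁,v₁,w₁)ᵀ and (u₂,v₂,w₂)ᵀ is the unique triple (u,v,w) ∈ K[x]_{n−1}^3 with T̃u + x^n v + (x^{2n}−1)w = g, and its first component u(x) encodes the solution of Tu = g. -/

import Mathlib

open Polynomial Finset

/-- The polynomial `T̃(x)` associated to the Toeplitz matrix with entries `t_{i-j}`. -/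
noncomputable def Ttilde {K : Type*} [Field K] (n : ℕ) (t : ℤ → K) : Polynomial K :=
  ∑ i ∈ Finset.range (2 * n),
    C (if i < n then t i else t ((i : ℤ) - 2 * n)) * X ^ i

/-- The degree of a vector of polynomials: the maximum of the nat-degrees of its entries. -/
noncomputable def vecDeg {K : Type*} [Field K] (v : Fin 3 → Polynomial K) : ℕ :=
  max (max (v 0).natDegree (v 1).natDegree) (v 2).natDegree

lemma Ttilde_coeff {K : Type*} [Field K] (n : ℕ) (t : ℤ → K) (k : ℕ) :
    (Ttilde n t).coeff k =
      if k < 2 * n then (if k < n then t k else t ((k : ℤ) - 2 * n)) else 0 := by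
  simp only [Ttilde, finset_sum_coeff, coeff_C_mul, coeff_X_pow, mul_ite, mul_one, mul_zero]
  rw [Finset.sum_ite_eq (range (2*n)) k]
  simp [Finset.mem_range]

lemma mulCoeff {K : Type*} [Field K] (T u : Polynomial K) (N m : ℕ)
    (hu : ∀ k, N ≤ k → k ≤ m → u.coeff k = 0) (hm : N ≤ m + 1) :
    (T * u).coeff m = ∑ j ∈ range N, T.coeff (m - j) * u.coeff j := by
  rw [mul_comm, coeff_mul, Finset.Nat.sum_antidiagonal_eq_sum_range_succ_mk]
  rw [← Finset.sum_range_add_sum_Ico _ hm]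
  have h0 : ∑ k ∈ Finset.Ico N (m+1), u.coeff k * T.coeff (m - k) = 0 :=
    Finset.sum_eq_zero fun k hk => by
      rw [hu k (Finset.mem_Ico.1 hk).1 (Nat.lt_succ_iff.1 (Finset.mem_Ico.1 hk).2), zero_mul]
  rw [h0, add_zero]
  exact Finset.sum_congr rfl fun j _ => mul_comm _ _

/-- key: extracting the Toeplitz system from the polynomial equation -/
lemma key {K : Type*} [Field K] (n : ℕ) (hn : 0 < n) (t : ℤ → K) (u v w g : Polynomial K)
    (hu : ∀ m, n ≤ m → u.coeff m = 0) (hv : ∀ m, n ≤ m → v.coeff m = 0)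
    (hw : ∀ m, n ≤ m → w.coeff m = 0) (hg : ∀ m, n ≤ m → g.coeff m = 0)
    (heq : Ttilde n t * u + X ^ n * v + (X ^ (2 * n) - 1) * w = g)
    (i : ℕ) (hi : i < n) :
    ∑ j ∈ range n, t ((i : ℤ) - j) * u.coeff j = g.coeff i := by
  -- low-index coefficient equation
  have E1 : (Ttilde n t * u).coeff i - w.coeff i = g.coeff i := by
    have := congrArg (fun P : Polynomial K => P.coeff i) heq
    simp only [coeff_add, coeff_sub, sub_mul, one_mul, mul_comm (X ^ n : Polynomial K),
      mul_comm (X ^ (2*n) : Polynomial K), coeff_mul_X_pow'] at this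
    rw [if_neg (by omega), if_neg (by omega)] at this
    linear_combination this
  -- high-index coefficient equation
  have E2 : (Ttilde n t * u).coeff (2*n + i) + w.coeff i = 0 := by
    have := congrArg (fun P : Polynomial K => P.coeff (2*n + i)) heq
    simp only [coeff_add, coeff_sub, sub_mul, one_mul, mul_comm (X ^ n : Polynomial K),
      mul_comm (X ^ (2*n) : Polynomial K), coeff_mul_X_pow'] at this
    rw [if_pos (by omega), if_pos (by omega)] at this
    have h2 : 2*n + i - 2*n = i := by omega
    rw [h2, hv _ (show n ≤ 2*n+i-n by omega), hw (2*n+i) (by omega),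
      hg _ (by omega)] at this
    linear_combination this
  -- compute the two coefficients of T̃ * u
  have C1 : (Ttilde n t * u).coeff i
      = ∑ j ∈ range n, (if j ≤ i then t ((i:ℤ) - j) * u.coeff j else 0) := by
    rw [mulCoeff (Ttilde n t) u (i+1) i (fun k hk hk' => absurd hk (by omega)) le_rfl]
    rw [← Finset.sum_range_add_sum_Ico _ (show i+1 ≤ n by omega)]
    have h0 : ∑ j ∈ Finset.Ico (i+1) n, (if j ≤ i then t ((i:ℤ) - j) * u.coeff j else 0) = 0 :=
      Finset.sum_eq_zero fun j hj => if_neg (by have := (Finset.mem_Ico.1 hj).1; omega)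
    rw [h0, add_zero]
    refine Finset.sum_congr rfl fun j hj => ?_
    have hji : j ≤ i := by have := Finset.mem_range.1 hj; omega
    rw [if_pos hji, Ttilde_coeff, if_pos (by omega), if_pos (by omega)]
    congr 2
    push_cast [Nat.cast_sub hji]
    ring
  have C2 : (Ttilde n t * u).coeff (2*n + i)
      = ∑ j ∈ range n, (if j ≤ i then 0 else t ((i:ℤ) - j) * u.coeff j) := by
    rw [mulCoeff (Ttilde n t) u n (2*n + i) (fun k hk _ => hu k hk) (by omega)]
    refine Finset.sum_congr rfl fun j hj => ?_
    have hjn := Finset.mem_range.1 hj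
    by_cases hji : j ≤ i
    · rw [if_pos hji, Ttilde_coeff, if_neg (by omega), zero_mul]
    · rw [if_neg hji, Ttilde_coeff, if_pos (by omega), if_neg (by omega)]
      congr 2
      have : ((2*n + i - j : ℕ) : ℤ) = 2*n + i - j := by omega
      rw [this]; ring
  have := E1
  rw [C1] at this
  rw [C2] at E2
  have comb : (∑ j ∈ range n, (if j ≤ i then t ((i:ℤ) - j) * u.coeff j else 0))
      + (∑ j ∈ range n, (if j ≤ i then 0 else t ((i:ℤ) - j) * u.coeff j))
      = ∑ j ∈ range n, t ((i:ℤ) - j) * u.coeff j := by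
    rw [← Finset.sum_add_distrib]
    refine Finset.sum_congr rfl fun j _ => ?_
    split_ifs <;> ring
  linear_combination this + E2 - comb

/-- Dividing `(0, x^n g, -g)ᵀ` by the 3×2 matrix whose columns form an `n`-basis of
`L(T̃(x), x^n, x^{2n}-1)` yields, as remainder, the unique triple `(u,v,w)` of degrees
`≤ n-1` with `T̃ u + x^n v + (x^{2n}-1) w = g`; its first component solves `T u = g`. -/
theorem stmt_6 {K : Type*} [Field K] (n : ℕ) (hn : 0 < n) (t : ℤ → K)
    (T : Matrix (Fin n) (Fin n) K) (hT : T = Matrix.of fun i j : Fin n => t ((i : ℤ) - (j : ℤ)))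
    (hTinv : IsUnit T)
    (gvec : Fin n → K) (g : Polynomial K) (hg : g = ∑ i : Fin n, C (gvec i) * X ^ (i : ℕ))
    (S : Submodule (Polynomial K) (Fin 3 → Polynomial K))
    (hS : ∀ p : Fin 3 → Polynomial K, p ∈ S ↔
      Ttilde n t * p 0 + X ^ n * p 1 + (X ^ (2 * n) - 1) * p 2 = 0)
    (b : Module.Basis (Fin 2) (Polynomial K) S)
    (c₁ c₂ : Fin 3 → Polynomial K)
    (hc₁ : (b 0 : Fin 3 → Polynomial K) = c₁) (hc₂ : (b 1 : Fin 3 → Polynomial K) = c₂)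
    (hdeg₁ : vecDeg c₁ = n) (hdeg₂ : vecDeg c₂ = n)
    -- the quotient `(p, q)` and the remainder of the division of `(0, x^n g, -g)ᵀ`
    (p q : Polynomial K) (rem : Fin 3 → Polynomial K)
    (hrem : rem = ![0, X ^ n * g, -g] - (p • c₁ + q • c₂))
    (hremdeg : ∀ i, (rem i).degree < n) :
    Ttilde n t * rem 0 + X ^ n * rem 1 + (X ^ (2 * n) - 1) * rem 2 = g ∧
    (∀ u v w : Polynomial K, u.degree < n → v.degree < n → w.degree < n →
      Ttilde n t * u + X ^ n * v + (X ^ (2 * n) - 1) * w = g →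
      u = rem 0 ∧ v = rem 1 ∧ w = rem 2) ∧
    T.mulVec (fun i : Fin n => (rem 0).coeff i) = gvec := by
  -- vanishing of high coefficients from degree bounds
  have hvan : ∀ P : Polynomial K, P.degree < n → ∀ m, n ≤ m → P.coeff m = 0 := by
    intro P hP m hm
    exact coeff_eq_zero_of_degree_lt (hP.trans_le (by exact_mod_cast hm))
  -- coefficients of g
  have hghigh : ∀ m, n ≤ m → g.coeff m = 0 := by
    intro m hm
    rw [hg, finset_sum_coeff]
    refine Finset.sum_eq_zero fun j _ => ?_
    rw [coeff_C_mul, coeff_X_pow, if_neg (by have := j.isLt; omega), mul_zero]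
  have hglow : ∀ i : Fin n, g.coeff (i : ℕ) = gvec i := by
    intro i
    rw [hg, finset_sum_coeff, Finset.sum_eq_single i]
    · simp [coeff_C_mul, coeff_X_pow]
    · intro c _ hc
      rw [coeff_C_mul, coeff_X_pow, if_neg (fun h => hc (Fin.val_injective h.symm)), mul_zero]
    · intro h; exact absurd (Finset.mem_univ i) h
  -- the columns are syzygies
  have h1 : Ttilde n t * c₁ 0 + X ^ n * c₁ 1 + (X ^ (2 * n) - 1) * c₁ 2 = 0 :=
    (hS c₁).1 (hc₁ ▸ (b 0).2)
  have h2 : Ttilde n t * c₂ 0 + X ^ n * c₂ 1 + (X ^ (2 * n) - 1) * c₂ 2 = 0 :=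
    (hS c₂).1 (hc₂ ▸ (b 1).2)
  -- components of rem
  have hr0 : rem 0 = -(p * c₁ 0 + q * c₂ 0) := by
    rw [hrem]; simp [Pi.sub_apply, Pi.add_apply, smul_eq_mul]
  have hr1 : rem 1 = X ^ n * g - (p * c₁ 1 + q * c₂ 1) := by
    rw [hrem]; simp [Pi.sub_apply, Pi.add_apply, smul_eq_mul]
  have hr2 : rem 2 = -g - (p * c₁ 2 + q * c₂ 2) := by
    rw [hrem]; simp [Pi.sub_apply, Pi.add_apply, smul_eq_mul]
  -- Part 1
  have heqrem : Ttilde n t * rem 0 + X ^ n * rem 1 + (X ^ (2 * n) - 1) * rem 2 = g := by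
    rw [hr0, hr1, hr2]
    linear_combination (-p) * h1 + (-q) * h2
  refine ⟨heqrem, ?_, ?_⟩
  · -- Part 2: uniqueness
    intro u v w hu hv hw hueq
    have hd : Ttilde n t * (u - rem 0) + X ^ n * (v - rem 1)
        + (X ^ (2 * n) - 1) * (w - rem 2) = 0 := by
      linear_combination hueq - heqrem
    have hd0 : (u - rem 0).degree < n := (degree_sub_le _ _).trans_lt (max_lt hu (hremdeg 0))
    have hd1 : (v - rem 1).degree < n := (degree_sub_le _ _).trans_lt (max_lt hv (hremdeg 1))
    have hd2 : (w - rem 2).degree < n := (degree_sub_le _ _).trans_lt (max_lt hw (hremdeg 2))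
    have hsys := fun (i : ℕ) (hi : i < n) =>
      key n hn t (u - rem 0) (v - rem 1) (w - rem 2) 0
        (hvan _ hd0) (hvan _ hd1) (hvan _ hd2) (fun m _ => coeff_zero m) hd i hi
    simp only [coeff_zero] at hsys
    set a : Fin n → K := fun j => (u - rem 0).coeff j with ha
    have hTa : T.mulVec a = 0 := by
      funext i
      rw [hT]
      simp only [Matrix.mulVec, dotProduct, Matrix.of_apply, Pi.zero_apply]
      rw [Fin.sum_univ_eq_sum_range (fun j => t ((i : ℤ) - j) * (u - rem 0).coeff j) n]
      exact hsys i i.isLt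
    have haz : a = 0 := by
      obtain ⟨U, hU⟩ := hTinv
      have : (↑U⁻¹ : Matrix (Fin n) (Fin n) K).mulVec (T.mulVec a) = a := by
        rw [Matrix.mulVec_mulVec, ← hU, Units.inv_mul, Matrix.one_mulVec]
      rw [hTa, Matrix.mulVec_zero] at this
      exact this.symm
    have hu0 : u - rem 0 = 0 := by
      ext m
      rw [coeff_zero]
      by_cases hm : m < n
      · have := congrFun haz ⟨m, hm⟩
        simpa [ha] using this
      · exact hvan _ hd0 m (by omega)
    have hue : u = rem 0 := by linear_combination hu0
    have hd' : X ^ n * (v - rem 1) + (X ^ (2 * n) - 1) * (w - rem 2) = 0 := by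
      rw [hu0] at hd
      linear_combination hd
    have hw0 : w - rem 2 = 0 := by
      ext m
      rw [coeff_zero]
      by_cases hm : m < n
      · have := congrArg (fun P : Polynomial K => P.coeff m) hd'
        simp only [coeff_add, coeff_zero, mul_comm (X ^ n : Polynomial K),
          mul_comm (X ^ (2*n) : Polynomial K), sub_mul, one_mul, coeff_sub,
          coeff_mul_X_pow'] at this
        simp only [if_neg (show ¬ n ≤ m from by omega),
          if_neg (show ¬ 2 * n ≤ m from by omega)] at this
        rw [coeff_sub]
        linear_combination -this
      · exact hvan _ hd2 m (by omega)
    have hv0 : v - rem 1 = 0 := by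
      rw [hw0, mul_zero, add_zero, mul_eq_zero] at hd'
      rcases hd' with h | h
      · exact absurd h (pow_ne_zero n X_ne_zero)
      · exact h
    exact ⟨hue, by linear_combination hv0, by linear_combination hw0⟩
  · -- Part 3
    have hsys := fun (i : ℕ) (hi : i < n) =>
      key n hn t (rem 0) (rem 1) (rem 2) g
        (hvan _ (hremdeg 0)) (hvan _ (hremdeg 1)) (hvan _ (hremdeg 2)) hghigh heqrem i hi
    funext i
    rw [hT]
    simp only [Matrix.mulVec, dotProduct, Matrix.of_apply]
    rw [Fin.sum_univ_eq_sum_range (fun j => t ((i : ℤ) - j) * (rem 0).coeff j) n]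
    rw [hsys i i.isLt]
    exact hglow i
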